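/- There exists a constant C > 0 such that for all v ≥ 1 and all η ∈ (0,1] and M ≥ 0, ∫_0^∞ (e^{−v²/(16s)} + e^{−v/2})/(√s·(s+1)) · (1_{s ∉ [η v², v²/η]} + e^{−M}·1_{s ∈ [η v², v²/η]}) ds ≤ C·(e^{−v/2} + 1/v·(1 + e^{−M}/√η + √η)). -/
import Mathlib

open Real MeasureTheory

private lemma exp_neg_le_inv' {x : ℝ} (hx : 0 < x) : Real.exp (-x) ≤ 1 / x := by
  rw [Real.exp_neg, inv_eq_one_div]
  exact one_div_le_one_div_of_le hx (by linarith [Real.add_one_le_exp x])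

private lemma div_sqrt_le {s N : ℝ} (hs : 0 < s) (hN : 0 ≤ N) :
    N / (Real.sqrt s * (s + 1)) ≤ N * s ^ (-(1:ℝ)/2) := by
  have hsq : 0 < Real.sqrt s := Real.sqrt_pos.2 hs
  have h1 : (Real.sqrt s)⁻¹ = s ^ (-(1:ℝ)/2) := by
    rw [show (-(1:ℝ)/2) = -(1/2) by norm_num, Real.rpow_neg hs.le, ← Real.sqrt_eq_rpow]
  calc N / (Real.sqrt s * (s + 1)) ≤ N / Real.sqrt s := by
        apply div_le_div_of_nonneg_left hN hsq
        · exact le_mul_of_one_le_right hsq.le (by linarith)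
    _ = N * s ^ (-(1:ℝ)/2) := by rw [div_eq_mul_inv, h1]

private lemma div_sqrt_le' {s N : ℝ} (hs : 1 ≤ s) (hN : 0 ≤ N) :
    N / (Real.sqrt s * (s + 1)) ≤ N * s ^ (-(3:ℝ)/2) := by
  have hs0 : (0:ℝ) < s := lt_of_lt_of_le one_pos hs
  have hsq : 0 < Real.sqrt s := Real.sqrt_pos.2 hs0
  have h32 : Real.sqrt s * s = s ^ ((3:ℝ)/2) := by
    rw [Real.sqrt_eq_rpow]
    nth_rewrite 2 [← Real.rpow_one s]
    rw [← Real.rpow_add hs0]; norm_num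
  have h1 : (s ^ ((3:ℝ)/2))⁻¹ = s ^ (-(3:ℝ)/2) := by
    rw [show (-(3:ℝ)/2) = -(3/2) by norm_num, Real.rpow_neg hs0.le]
  have hpos : 0 < s ^ ((3:ℝ)/2) := Real.rpow_pos_of_pos hs0 _
  calc N / (Real.sqrt s * (s + 1)) ≤ N / (s ^ ((3:ℝ)/2)) := by
        apply div_le_div_of_nonneg_left hN hpos
        · rw [← h32]
          exact mul_le_mul_of_nonneg_left (by linarith) hsq.le
    _ = N * s ^ (-(3:ℝ)/2) := by rw [div_eq_mul_inv, h1]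

set_option maxHeartbeats 2000000 in
/-- Error-term integral bound in the first-moment computation of cluster level sets:
the contribution of times `s` outside the window `[η v², v²/η]`, plus the contribution
inside the window penalized by `e^{-M}`, is at most
`C (e^{-v/2} + v⁻¹ (1 + e^{-M}/√η + √η))`. -/
theorem cluster_error_integral_bound :
    ∃ C : ℝ, 0 < C ∧ ∀ v η M : ℝ, 1 ≤ v → η ∈ Set.Ioc (0:ℝ) 1 → 0 ≤ M →
      (∫ s in Set.Ioi (0:ℝ),
          (Real.exp (-(v^2 / (16*s))) + Real.exp (-(v/2))) / (Real.sqrt s * (s+1)) *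
            (Set.indicator (Set.Icc (η * v^2) (v^2 / η))ᶜ (fun _ => (1:ℝ)) s
              + Real.exp (-M) * Set.indicator (Set.Icc (η * v^2) (v^2 / η)) (fun _ => (1:ℝ)) s))
        ≤ C * (Real.exp (-(v/2))
            + (1/v) * (1 + Real.exp (-M) / Real.sqrt η + Real.sqrt η)) := by
  refine ⟨68, by norm_num, ?_⟩
  intro v η M hv hη hM
  have hv0 : (0:ℝ) < v := lt_of_lt_of_le one_pos hv
  have hv2 : (1:ℝ) ≤ v^2 := by nlinarith
  set E : ℝ := Real.exp (-(v/2)) with hEdef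
  have hE0 : 0 < E := Real.exp_pos _
  have hE1 : E ≤ 1 := by
    rw [hEdef, show (1:ℝ) = Real.exp 0 by simp]
    exact Real.exp_le_exp.2 (by linarith)
  set G : ℝ → ℝ := fun s =>
    (Real.exp (-(v^2 / (16*s))) + Real.exp (-(v/2))) / (Real.sqrt s * (s+1)) with hGdef
  have hGmeas : Measurable G := by
    apply Measurable.div
    · exact ((measurable_const.div (measurable_const.mul measurable_id)).neg.exp).add
        measurable_const
    · exact (Real.continuous_sqrt.measurable).mul (measurable_id.add measurable_const)
  have hGnonneg : ∀ s : ℝ, 0 < s → 0 ≤ G s := by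
    intro s hs
    apply div_nonneg (by positivity)
    have := Real.sqrt_nonneg s
    nlinarith
  -- pointwise bound of the full integrand by G
  have hFleG : ∀ s : ℝ, 0 < s →
      G s * (Set.indicator (Set.Icc (η * v^2) (v^2 / η))ᶜ (fun _ => (1:ℝ)) s
        + Real.exp (-M) * Set.indicator (Set.Icc (η * v^2) (v^2 / η)) (fun _ => (1:ℝ)) s)
        ≤ G s := by
    intro s hs
    have hI : (Set.indicator (Set.Icc (η * v^2) (v^2 / η))ᶜ (fun _ => (1:ℝ)) s
        + Real.exp (-M) * Set.indicator (Set.Icc (η * v^2) (v^2 / η)) (fun _ => (1:ℝ)) s) ≤ 1 := by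
      by_cases h : s ∈ Set.Icc (η * v^2) (v^2 / η)
      · rw [Set.indicator_of_notMem (by simpa using h), Set.indicator_of_mem h]
        have : Real.exp (-M) ≤ 1 := by
          rw [show (1:ℝ) = Real.exp 0 by simp]; exact Real.exp_le_exp.2 (by linarith)
        simpa using this
      · rw [Set.indicator_of_mem (by simpa using h), Set.indicator_of_notMem h]
        simp
    calc G s * _ ≤ G s * 1 := by
          apply mul_le_mul_of_nonneg_left hI (hGnonneg s hs)
      _ = G s := mul_one _
  have hFnonneg : ∀ s : ℝ, 0 < s →
      0 ≤ G s * (Set.indicator (Set.Icc (η * v^2) (v^2 / η))ᶜ (fun _ => (1:ℝ)) s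
        + Real.exp (-M) * Set.indicator (Set.Icc (η * v^2) (v^2 / η)) (fun _ => (1:ℝ)) s) := by
    intro s hs
    apply mul_nonneg (hGnonneg s hs)
    apply add_nonneg
    · exact Set.indicator_nonneg (fun _ _ => zero_le_one) s
    · exact mul_nonneg (Real.exp_pos _).le (Set.indicator_nonneg (fun _ _ => zero_le_one) s)
  -- integrability of rpow majorants
  have hInt1 : IntegrableOn (fun s : ℝ => s ^ (-(1:ℝ)/2)) (Set.Ioc 0 1) := by
    have := (intervalIntegral.intervalIntegrable_rpow' (r := -(1:ℝ)/2) (by norm_num)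
      (a := 0) (b := 1)).1
    exact this
  have h0mem : (0:ℝ) ∉ Set.uIcc 1 (v^2) := by
    rw [Set.uIcc_of_le hv2]
    intro h
    exact absurd h.1 (by norm_num)
  have hInt2a : IntegrableOn (fun s : ℝ => s ^ (-(1:ℝ)/2)) (Set.Ioc 1 (v^2)) :=
    (intervalIntegral.intervalIntegrable_rpow (Or.inr h0mem)).1
  have hInt2b : IntegrableOn (fun s : ℝ => s ^ (-(3:ℝ)/2)) (Set.Ioc 1 (v^2)) :=
    (intervalIntegral.intervalIntegrable_rpow (Or.inr h0mem)).1
  have hInt3 : IntegrableOn (fun s : ℝ => s ^ (-(3:ℝ)/2)) (Set.Ioi (v^2)) :=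
    integrableOn_Ioi_rpow_of_lt (by norm_num) (by positivity)
  have hInt1' : IntegrableOn (fun s : ℝ => s ^ (-(3:ℝ)/2)) (Set.Ioi 1) :=
    integrableOn_Ioi_rpow_of_lt (by norm_num) one_pos
  -- integrability of G
  have hG1 : IntegrableOn G (Set.Ioc 0 1) := by
    apply Integrable.mono' (hInt1.const_mul 2) hGmeas.aestronglyMeasurable.restrict
    refine (ae_restrict_iff' measurableSet_Ioc).2 (ae_of_all _ ?_)
    intro s hs
    rw [Real.norm_eq_abs, abs_of_nonneg (hGnonneg s hs.1)]
    have hnum : Real.exp (-(v^2 / (16*s))) + Real.exp (-(v/2)) ≤ 2 := by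
      have h1 : Real.exp (-(v^2 / (16*s))) ≤ 1 := by
        rw [show (1:ℝ) = Real.exp 0 by simp]
        apply Real.exp_le_exp.2
        have : 0 ≤ v^2 / (16*s) := div_nonneg (by positivity) (by nlinarith [hs.1])
        linarith
      have h2 : Real.exp (-(v/2)) ≤ 1 := hE1
      linarith
    calc G s ≤ (Real.exp (-(v^2 / (16*s))) + Real.exp (-(v/2))) * s ^ (-(1:ℝ)/2) :=
          div_sqrt_le hs.1 (by positivity)
      _ ≤ 2 * s ^ (-(1:ℝ)/2) := by
          apply mul_le_mul_of_nonneg_right hnum (Real.rpow_nonneg hs.1.le _)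
  have hG2 : IntegrableOn G (Set.Ioi 1) := by
    apply Integrable.mono' (hInt1'.const_mul 2) hGmeas.aestronglyMeasurable.restrict
    refine (ae_restrict_iff' measurableSet_Ioi).2 (ae_of_all _ ?_)
    intro s hs
    have hs1 : (1:ℝ) ≤ s := le_of_lt hs
    have hs0 : (0:ℝ) < s := lt_of_lt_of_le one_pos hs1
    rw [Real.norm_eq_abs, abs_of_nonneg (hGnonneg s hs0)]
    have hnum : Real.exp (-(v^2 / (16*s))) + Real.exp (-(v/2)) ≤ 2 := by
      have h1 : Real.exp (-(v^2 / (16*s))) ≤ 1 := by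
        rw [show (1:ℝ) = Real.exp 0 by simp]
        apply Real.exp_le_exp.2
        have : 0 ≤ v^2 / (16*s) := div_nonneg (by positivity) (by nlinarith [hs0])
        linarith
      linarith
    calc G s ≤ (Real.exp (-(v^2 / (16*s))) + Real.exp (-(v/2))) * s ^ (-(3:ℝ)/2) :=
          div_sqrt_le' hs1 (by positivity)
      _ ≤ 2 * s ^ (-(3:ℝ)/2) := by
          apply mul_le_mul_of_nonneg_right hnum (Real.rpow_nonneg hs0.le _)
  have hG2a : IntegrableOn G (Set.Ioc 1 (v^2)) := hG2.mono_set Set.Ioc_subset_Ioi_self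
  have hG2b : IntegrableOn G (Set.Ioi (v^2)) := hG2.mono_set (Set.Ioi_subset_Ioi hv2)
  have hGIoi : IntegrableOn G (Set.Ioi 0) := by
    have := hG1.union hG2
    rwa [Set.Ioc_union_Ioi_eq_Ioi zero_le_one] at this
  -- step 1 : integral of F ≤ integral of G
  have step1 : (∫ s in Set.Ioi (0:ℝ),
      G s * (Set.indicator (Set.Icc (η * v^2) (v^2 / η))ᶜ (fun _ => (1:ℝ)) s
        + Real.exp (-M) * Set.indicator (Set.Icc (η * v^2) (v^2 / η)) (fun _ => (1:ℝ)) s))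
      ≤ ∫ s in Set.Ioi (0:ℝ), G s := by
    apply integral_mono_of_nonneg
    · refine (ae_restrict_iff' measurableSet_Ioi).2 (ae_of_all _ ?_)
      exact fun s hs => hFnonneg s hs
    · exact hGIoi
    · refine (ae_restrict_iff' measurableSet_Ioi).2 (ae_of_all _ ?_)
      exact fun s hs => hFleG s hs
  -- split the integral of G
  have split1 : (∫ s in Set.Ioi (0:ℝ), G s)
      = (∫ s in Set.Ioc (0:ℝ) 1, G s) + ∫ s in Set.Ioi (1:ℝ), G s := by
    rw [← Set.Ioc_union_Ioi_eq_Ioi zero_le_one,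
      setIntegral_union Set.Ioc_disjoint_Ioi_same measurableSet_Ioi hG1 hG2]
  have split2 : (∫ s in Set.Ioi (1:ℝ), G s)
      = (∫ s in Set.Ioc (1:ℝ) (v^2), G s) + ∫ s in Set.Ioi (v^2), G s := by
    rw [← Set.Ioc_union_Ioi_eq_Ioi hv2,
      setIntegral_union Set.Ioc_disjoint_Ioi_same measurableSet_Ioi hG2a hG2b]
  -- exact values of power integrals
  have hvhalf : ((v^2 : ℝ)) ^ ((1:ℝ)/2) = v := by
    rw [show ((v:ℝ)^2) = v ^ ((2:ℕ):ℝ) from (Real.rpow_natCast v 2).symm,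
      ← Real.rpow_mul hv0.le]
    norm_num
  have hvneg : ((v^2 : ℝ)) ^ (-(1:ℝ)/2) = v⁻¹ := by
    rw [show (-(1:ℝ)/2) = -((1:ℝ)/2) by norm_num, Real.rpow_neg (by positivity), hvhalf]
  have I1 : (∫ s in Set.Ioc (0:ℝ) 1, s ^ (-(1:ℝ)/2)) = 2 := by
    rw [← intervalIntegral.integral_of_le zero_le_one,
      integral_rpow (Or.inl (by norm_num))]
    rw [Real.one_rpow, Real.zero_rpow (by norm_num)]
    norm_num
  have I2 : (∫ s in Set.Ioc (1:ℝ) (v^2), s ^ (-(1:ℝ)/2)) = 2*v - 2 := by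
    rw [← intervalIntegral.integral_of_le hv2,
      integral_rpow (Or.inl (by norm_num))]
    rw [show (-(1:ℝ)/2 + 1) = (1:ℝ)/2 by norm_num, hvhalf, Real.one_rpow]
    ring
  have I3 : (∫ s in Set.Ioc (1:ℝ) (v^2), s ^ (-(3:ℝ)/2)) = 2 - 2/v := by
    rw [← intervalIntegral.integral_of_le hv2,
      integral_rpow (Or.inr ⟨by norm_num, h0mem⟩)]
    rw [show (-(3:ℝ)/2 + 1) = -(1:ℝ)/2 by norm_num, hvneg, Real.one_rpow]
    rw [div_eq_iff (by norm_num : (-(1:ℝ)/2) ≠ 0)]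
    field_simp
    ring
  have I4 : (∫ s in Set.Ioi (v^2 : ℝ), s ^ (-(3:ℝ)/2)) = 2 / v := by
    rw [integral_Ioi_rpow_of_lt (by norm_num) (by positivity : (0:ℝ) < v^2)]
    rw [show (-(3:ℝ)/2 + 1) = -(1:ℝ)/2 by norm_num, hvneg]
    field_simp
  -- bound on Ioc 0 1
  have B1 : (∫ s in Set.Ioc (0:ℝ) 1, G s) ≤ (16/v + E) * 2 := by
    have hb : ∀ s ∈ Set.Ioc (0:ℝ) 1, G s ≤ (16/v + E) * s ^ (-(1:ℝ)/2) := by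
      intro s hs
      have hnum : Real.exp (-(v^2 / (16*s))) + Real.exp (-(v/2)) ≤ 16/v + E := by
        have h1 : Real.exp (-(v^2 / (16*s))) ≤ 16/v := by
          have hx : v/16 ≤ v^2 / (16*s) := by
            rw [div_le_div_iff₀ (by norm_num) (by nlinarith [hs.1] : (0:ℝ) < 16*s)]
            nlinarith [hs.1, hs.2, hv]
          calc Real.exp (-(v^2 / (16*s))) ≤ Real.exp (-(v/16)) :=
                Real.exp_le_exp.2 (by linarith)
            _ ≤ 1 / (v/16) := exp_neg_le_inv' (by positivity)
            _ = 16/v := by field_simp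
        linarith [le_refl E]
      calc G s ≤ (Real.exp (-(v^2 / (16*s))) + Real.exp (-(v/2))) * s ^ (-(1:ℝ)/2) :=
            div_sqrt_le hs.1 (by positivity)
        _ ≤ (16/v + E) * s ^ (-(1:ℝ)/2) :=
            mul_le_mul_of_nonneg_right hnum (Real.rpow_nonneg hs.1.le _)
    calc (∫ s in Set.Ioc (0:ℝ) 1, G s)
        ≤ ∫ s in Set.Ioc (0:ℝ) 1, (16/v + E) * s ^ (-(1:ℝ)/2) :=
          setIntegral_mono_on hG1 (hInt1.const_mul _) measurableSet_Ioc hb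
      _ = (16/v + E) * 2 := by rw [integral_const_mul, I1]
  -- bound on Ioc 1 v^2
  have B2 : (∫ s in Set.Ioc (1:ℝ) (v^2), G s) ≤ 16/v^2 * (2*v - 2) + E * (2 - 2/v) := by
    have hb : ∀ s ∈ Set.Ioc (1:ℝ) (v^2), G s
        ≤ 16/v^2 * s ^ (-(1:ℝ)/2) + E * s ^ (-(3:ℝ)/2) := by
      intro s hs
      have hs0 : (0:ℝ) < s := lt_of_lt_of_le one_pos hs.1.le
      have hmul : s * s ^ (-(3:ℝ)/2) = s ^ (-(1:ℝ)/2) := by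
        nth_rewrite 1 [← Real.rpow_one s]
        rw [← Real.rpow_add hs0]; norm_num
      have h1 : Real.exp (-(v^2 / (16*s))) ≤ 16 * s / v^2 := by
        calc Real.exp (-(v^2 / (16*s))) ≤ 1 / (v^2 / (16*s)) :=
              exp_neg_le_inv' (div_pos (by positivity) (by linarith [hs0]))
          _ = 16 * s / v^2 := by rw [one_div_div]
      calc G s ≤ (Real.exp (-(v^2 / (16*s))) + Real.exp (-(v/2))) * s ^ (-(3:ℝ)/2) :=
            div_sqrt_le' hs.1.le (by positivity)
        _ = Real.exp (-(v^2 / (16*s))) * s ^ (-(3:ℝ)/2) + E * s ^ (-(3:ℝ)/2) := by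
            rw [add_mul]
        _ ≤ (16 * s / v^2) * s ^ (-(3:ℝ)/2) + E * s ^ (-(3:ℝ)/2) := by
            have := mul_le_mul_of_nonneg_right h1 (Real.rpow_nonneg hs0.le (-(3:ℝ)/2))
            linarith
        _ = 16/v^2 * s ^ (-(1:ℝ)/2) + E * s ^ (-(3:ℝ)/2) := by
            rw [← hmul]; ring
    have hm2a : IntegrableOn (fun s : ℝ => 16/v^2 * s ^ (-(1:ℝ)/2)) (Set.Ioc 1 (v^2)) :=
      hInt2a.const_mul (16/v^2)
    have hm2b : IntegrableOn (fun s : ℝ => E * s ^ (-(3:ℝ)/2)) (Set.Ioc 1 (v^2)) :=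
      hInt2b.const_mul E
    have hm2 : IntegrableOn
        (fun s : ℝ => 16/v^2 * s ^ (-(1:ℝ)/2) + E * s ^ (-(3:ℝ)/2)) (Set.Ioc 1 (v^2)) :=
      hm2a.add hm2b
    calc (∫ s in Set.Ioc (1:ℝ) (v^2), G s)
        ≤ ∫ s in Set.Ioc (1:ℝ) (v^2), (16/v^2 * s ^ (-(1:ℝ)/2) + E * s ^ (-(3:ℝ)/2)) :=
          setIntegral_mono_on hG2a hm2 measurableSet_Ioc hb
      _ = 16/v^2 * (2*v - 2) + E * (2 - 2/v) := by
          rw [integral_add hm2a hm2b, integral_const_mul, integral_const_mul, I2, I3]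
  -- bound on Ioi v^2
  have B3 : (∫ s in Set.Ioi (v^2 : ℝ), G s) ≤ 2 * (2/v) := by
    have hb : ∀ s ∈ Set.Ioi (v^2 : ℝ), G s ≤ 2 * s ^ (-(3:ℝ)/2) := by
      intro s hs
      have hs1 : (1:ℝ) ≤ s := le_trans hv2 (le_of_lt hs)
      have hs0 : (0:ℝ) < s := lt_of_lt_of_le one_pos hs1
      have hnum : Real.exp (-(v^2 / (16*s))) + Real.exp (-(v/2)) ≤ 2 := by
        have h1 : Real.exp (-(v^2 / (16*s))) ≤ 1 := by
          rw [show (1:ℝ) = Real.exp 0 by simp]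
          apply Real.exp_le_exp.2
          have : 0 ≤ v^2 / (16*s) := div_nonneg (by positivity) (by nlinarith [hs0])
          linarith
        linarith
      calc G s ≤ (Real.exp (-(v^2 / (16*s))) + Real.exp (-(v/2))) * s ^ (-(3:ℝ)/2) :=
            div_sqrt_le' hs1 (by positivity)
        _ ≤ 2 * s ^ (-(3:ℝ)/2) :=
            mul_le_mul_of_nonneg_right hnum (Real.rpow_nonneg hs0.le _)
    calc (∫ s in Set.Ioi (v^2 : ℝ), G s)
        ≤ ∫ s in Set.Ioi (v^2 : ℝ), 2 * s ^ (-(3:ℝ)/2) :=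
          setIntegral_mono_on hG2b (hInt3.const_mul _) measurableSet_Ioi hb
      _ = 2 * (2/v) := by rw [integral_const_mul, I4]
  -- final assembly
  have hT : 0 ≤ Real.exp (-M) / Real.sqrt η + Real.sqrt η := by positivity
  have h1v : 0 < 1/v := by positivity
  calc (∫ s in Set.Ioi (0:ℝ),
          G s * (Set.indicator (Set.Icc (η * v^2) (v^2 / η))ᶜ (fun _ => (1:ℝ)) s
            + Real.exp (-M) * Set.indicator (Set.Icc (η * v^2) (v^2 / η)) (fun _ => (1:ℝ)) s))
      ≤ ∫ s in Set.Ioi (0:ℝ), G s := step1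
    _ = (∫ s in Set.Ioc (0:ℝ) 1, G s) + ((∫ s in Set.Ioc (1:ℝ) (v^2), G s)
        + ∫ s in Set.Ioi (v^2), G s) := by rw [split1, split2]
    _ ≤ (16/v + E) * 2 + (16/v^2 * (2*v - 2) + E * (2 - 2/v) + 2 * (2/v)) := by
        linarith
    _ ≤ 68/v + 4*E := by
        have key : 68/v + 4*E
            - ((16/v + E) * 2 + (16/v^2 * (2*v - 2) + E * (2 - 2/v) + 2 * (2/v)))
            = 32/v^2 + 2*(E/v) := by
          field_simp
          ring
        have pos : (0:ℝ) ≤ 32/v^2 + 2*(E/v) := by positivity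
        linarith [key, pos]
    _ ≤ 68 * (E + (1/v) * (1 + Real.exp (-M) / Real.sqrt η + Real.sqrt η)) := by
        have key : 68 * (E + (1/v) * (1 + Real.exp (-M) / Real.sqrt η + Real.sqrt η))
            - (68/v + 4*E)
            = 64*E + (68*((Real.exp (-M) / Real.sqrt η)/v) + 68*(Real.sqrt η/v)) := by
          ring
        have pos : (0:ℝ) ≤ 68*((Real.exp (-M) / Real.sqrt η)/v) + 68*(Real.sqrt η/v) := by
          positivity
        linarith [key, pos, hE0.le]
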